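/- arXiv:1910.00502 — 3 statements merged into one kernel-verified Lean document; each statement's English description precedes it below -/
import Mathlib

section
/- For every finite set Δ of points in (2ℤ)^n, there exists a unique maximal Δ-mediated set Δ*, i.e., a Δ-mediated set that contains every Δ-mediated set, and it satisfies Δ ∪ Mid(Δ) ⊆ Δ* ⊆ conv(Δ) ∩ ℤ^n. -/
open Set

/-- Cast an integer lattice point to a real point. -/
def toR {n : ℕ} (p : Fin n → ℤ) : Fin n → ℝ := fun i => (p i : ℝ)

/-- A lattice point all of whose coordinates are even, i.e., a point of `(2ℤ)^n`. -/
def Even2 {n : ℕ} (p : Fin n → ℤ) : Prop := ∀ i, 2 ∣ p i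

/-- The set of midpoints of pairs of distinct even points of `L`. -/
def Mid2 {n : ℕ} (L : Set (Fin n → ℤ)) : Set (Fin n → ℤ) :=
  {m | ∃ s ∈ L, ∃ t ∈ L, Even2 s ∧ Even2 t ∧ s ≠ t ∧ s + t = 2 • m}

/-- `L ⊆ ℤ^n` is `Δ`-mediated if it contains `Δ` and every element of `L`
is a midpoint of two distinct even points of `L` or belongs to `Δ`. -/
def IsMediated {n : ℕ} (Δ L : Set (Fin n → ℤ)) : Prop :=
  L.Finite ∧ Δ ⊆ L ∧ L ⊆ Mid2 L ∪ Δ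

/-- The lattice points of the convex hull `conv(Δ) ∩ ℤ^n`. -/
def convZ {n : ℕ} (Δ : Set (Fin n → ℤ)) : Set (Fin n → ℤ) :=
  {p | toR p ∈ convexHull ℝ (toR '' Δ)}

lemma toR_injective {n : ℕ} : Function.Injective (toR (n := n)) := by
  intro p q h
  funext i
  have := congrFun h i
  simp only [toR] at this
  exact_mod_cast this

lemma mid2_mono {n : ℕ} {L L' : Set (Fin n → ℤ)} (h : L ⊆ L') : Mid2 L ⊆ Mid2 L' := by
  rintro m ⟨s, hs, t, ht, hes, het, hst, hsum⟩
  exact ⟨s, h hs, t, h ht, hes, het, hst, hsum⟩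

lemma mid2_sum_apply {n : ℕ} {s t m : Fin n → ℤ} (h : s + t = 2 • m) (i : Fin n) :
    s i + t i = 2 * m i := by
  have := congrFun h i
  simpa [two_mul, two_nsmul] using this

lemma mid2_finite {n : ℕ} {Δ : Set (Fin n → ℤ)} (h : Δ.Finite) : (Mid2 Δ).Finite := by
  have hsub : Mid2 Δ ⊆
      (fun q : (Fin n → ℤ) × (Fin n → ℤ) => fun i => (q.1 i + q.2 i) / 2) '' (Δ ×ˢ Δ) := by
    rintro m ⟨s, hs, t, ht, _, _, _, hsum⟩
    refine ⟨(s, t), ⟨hs, ht⟩, ?_⟩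
    funext i
    show (s i + t i) / 2 = m i
    have := mid2_sum_apply hsum i
    omega
  exact ((h.prod h).image _).subset hsub

lemma convZ_finite {n : ℕ} {Δ : Set (Fin n → ℤ)} (h : Δ.Finite) : (convZ Δ).Finite := by
  have hb : Bornology.IsBounded (convexHull ℝ (toR '' Δ)) :=
    isBounded_convexHull.2 (h.image _).isBounded
  obtain ⟨C, hC⟩ := hb.exists_norm_le
  have hsub : convZ Δ ⊆ Set.Icc (fun _ => -⌈C⌉) (fun _ => ⌈C⌉) := by
    intro p hp
    have hnorm := hC _ hp
    have key : ∀ i, -⌈C⌉ ≤ p i ∧ p i ≤ ⌈C⌉ := by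
      intro i
      have h1 : |(p i : ℝ)| ≤ C := by
        have := norm_le_pi_norm (toR p) i
        simpa [toR] using this.trans hnorm
      have h2 : (p i : ℝ) ≤ (⌈C⌉ : ℝ) := (abs_le.1 h1).2.trans (Int.le_ceil C)
      have h3 : -((⌈C⌉ : ℝ)) ≤ (p i : ℝ) := by
        have := (abs_le.1 h1).1
        linarith [Int.le_ceil C]
      exact ⟨by exact_mod_cast h3, by exact_mod_cast h2⟩
    exact ⟨fun i => (key i).1, fun i => (key i).2⟩
  exact (Set.finite_Icc _ _).subset hsub

lemma mediated_subset_convZ {n : ℕ} {Δ L : Set (Fin n → ℤ)} (hfin : Δ.Finite)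
    (hM : IsMediated Δ L) : L ⊆ convZ Δ := by
  obtain ⟨hLfin, hΔL, hmid⟩ := hM
  have hAfin : (toR '' L).Finite := hLfin.image _
  set K := convexHull ℝ (toR '' L) with hK
  have hcomp : IsCompact K := hAfin.isCompact_convexHull ℝ
  have hconv : Convex ℝ K := convex_convexHull _ _
  have hE : K.extremePoints ℝ ⊆ toR '' Δ := by
    intro x hx
    rw [mem_extremePoints] at hx
    obtain ⟨p, hp, rfl⟩ := extremePoints_convexHull_subset (mem_extremePoints.2 hx)
    rcases hmid hp with hmid' | hΔ
    · exfalso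
      obtain ⟨s, hs, t, ht, _, _, hst, hsum⟩ := hmid'
      have hxseg : toR p ∈ openSegment ℝ (toR s) (toR t) := by
        refine ⟨1/2, 1/2, by norm_num, by norm_num, by norm_num, ?_⟩
        funext i
        have := mid2_sum_apply hsum i
        simp only [Pi.add_apply, Pi.smul_apply, smul_eq_mul, toR]
        have h2 : (s i : ℝ) + (t i : ℝ) = 2 * (p i : ℝ) := by exact_mod_cast this
        linarith
      have h12 := hx.2 (toR s) (subset_convexHull ℝ _ ⟨s, hs, rfl⟩)
        (toR t) (subset_convexHull ℝ _ ⟨t, ht, rfl⟩) hxseg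
      exact hst (toR_injective (h12.1.trans h12.2.symm))
    · exact ⟨p, hΔ, rfl⟩
  intro p hp
  have hpK : toR p ∈ K := subset_convexHull ℝ _ ⟨p, hp, rfl⟩
  have hKM : K ⊆ convexHull ℝ (toR '' Δ) := by
    calc K = closure (convexHull ℝ (K.extremePoints ℝ)) :=
          (closure_convexHull_extremePoints hcomp hconv).symm
      _ ⊆ closure (convexHull ℝ (toR '' Δ)) := closure_mono (convexHull_mono hE)
      _ = convexHull ℝ (toR '' Δ) := ((hfin.image _).isClosed_convexHull ℝ).closure_eq
  exact hKM hpK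

/-- For every finite even set `Δ ⊆ (2ℤ)^n` there is a unique maximal `Δ`-mediated
set `Δ*`, and it satisfies `Δ ∪ Mid(Δ) ⊆ Δ* ⊆ conv(Δ) ∩ ℤ^n`. -/
theorem exists_unique_maximal_mediated_set {n : ℕ} (Δ : Set (Fin n → ℤ))
    (hfin : Δ.Finite) (heven : ∀ p ∈ Δ, Even2 p) :
    ∃! M : Set (Fin n → ℤ),
      (IsMediated Δ M ∧ ∀ L, IsMediated Δ L → L ⊆ M) ∧
        Δ ∪ Mid2 Δ ⊆ M ∧ M ⊆ convZ Δ := by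
  classical
  set M := ⋃₀ {L | IsMediated Δ L} with hMdef
  have hsub : ∀ L, IsMediated Δ L → L ⊆ M := fun L hL => subset_sUnion_of_mem hL
  have hMconv : M ⊆ convZ Δ := by
    rintro p ⟨L, hL, hpL⟩
    exact mediated_subset_convZ hfin hL hpL
  have hMfin : M.Finite := (convZ_finite hfin).subset hMconv
  have hΔmed : IsMediated Δ Δ := ⟨hfin, subset_rfl, fun p hp => Or.inr hp⟩
  have hMmed : IsMediated Δ M := by
    refine ⟨hMfin, hsub Δ hΔmed, ?_⟩
    rintro p ⟨L, hL, hpL⟩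
    rcases hL.2.2 hpL with h | h
    · exact Or.inl (mid2_mono (hsub L hL) h)
    · exact Or.inr h
  have hmidmed : IsMediated Δ (Δ ∪ Mid2 Δ) := by
    refine ⟨hfin.union (mid2_finite hfin), subset_union_left, ?_⟩
    rintro p (hp | hp)
    · exact Or.inr hp
    · exact Or.inl (mid2_mono subset_union_left hp)
  refine ⟨M, ⟨⟨hMmed, hsub⟩, hsub _ hmidmed, hMconv⟩, ?_⟩
  rintro M' ⟨⟨hM'med, hM'max⟩, -, -⟩
  exact Subset.antisymm (hsub M' hM'med) (hM'max M hMmed)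
end

section
/- For Δ = {(0,0,0), (0,2,2), (2,0,2), (2,2,0)} ⊆ (2ℤ)³, the maximal Δ-mediated set equals (conv(Δ) ∩ ℤ³) \ {(1,1,1)} and this set equals Δ ∪ Mid(Δ); in particular, Δ is an M-simplex but not an H-simplex. -/
open Set

/-! ### Auxiliary definitions and lemmas -/

/-- The simplex `Δ`. -/
def D3 : Set (Fin 3 → ℤ) := {![0,0,0], ![0,2,2], ![2,0,2], ![2,2,0]}

/-- The ten-point set `Δ ∪ Mid(Δ)`. -/
def E10 : Set (Fin 3 → ℤ) :=
  {![0,0,0], ![0,2,2], ![2,0,2], ![2,2,0],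
   ![0,1,1], ![1,0,1], ![1,1,0], ![1,1,2], ![1,2,1], ![2,1,1]}

lemma coord_sum {s t m : Fin 3 → ℤ} (h : s + t = 2 • m) (i : Fin 3) :
    s i + t i = m i + m i := by
  have := congrFun h i
  simp only [Pi.add_apply, Pi.smul_apply, two_smul] at this
  linarith

lemma lex4_le {a1 a2 a3 a4 b1 b2 b3 b4 : ℤ}
    (h : (toLex (a1, toLex (a2, toLex (a3, a4))) : ℤ ×ₗ (ℤ ×ₗ (ℤ ×ₗ ℤ))) ≤
         toLex (b1, toLex (b2, toLex (b3, b4)))) :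
    a1 < b1 ∨ (a1 = b1 ∧ (a2 < b2 ∨ (a2 = b2 ∧ (a3 < b3 ∨ (a3 = b3 ∧ a4 ≤ b4))))) := by
  simp only [Prod.Lex.le_iff] at h
  exact h

/-- The lexicographic comparison function used to find a "vertex-like" maximal point. -/
def lexF (u v w : ℤ) (p : Fin 3 → ℤ) : ℤ ×ₗ (ℤ ×ₗ (ℤ ×ₗ ℤ)) :=
  toLex (u * p 0 + v * p 1 + w * p 2, toLex (p 0, toLex (p 1, p 2)))

/-- Any linear functional on a mediated set is bounded by its bound on `Δ`. -/
lemma bound_of_mediated {Δ L : Set (Fin 3 → ℤ)} (hmed : IsMediated Δ L)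
    (u v w B : ℤ) (hB : ∀ d ∈ Δ, u * d 0 + v * d 1 + w * d 2 ≤ B) :
    ∀ q ∈ L, u * q 0 + v * q 1 + w * q 2 ≤ B := by
  obtain ⟨hfin, hΔL, hLsub⟩ := hmed
  rcases L.eq_empty_or_nonempty with rfl | hne
  · simp
  obtain ⟨p, hpL, hpmax⟩ := Set.exists_max_image L (lexF u v w) hfin hne
  have hmax' : ∀ q ∈ L, lexF u v w q ≤ lexF u v w p := by
    intro q hq
    by_contra hlt
    exact hlt (hpmax q hq)
  have hpΔ : p ∈ Δ := by
    rcases hLsub hpL with hmid | hΔ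
    · exfalso
      obtain ⟨s, hsL, t, htL, hse, hte, hst, hsum⟩ := hmid
      have hs := lex4_le (hmax' s hsL)
      have ht := lex4_le (hmax' t htL)
      have c0 := coord_sum hsum 0
      have c1 := coord_sum hsum 1
      have c2 := coord_sum hsum 2
      have fsum : (u * s 0 + v * s 1 + w * s 2) + (u * t 0 + v * t 1 + w * t 2)
          = (u * p 0 + v * p 1 + w * p 2) + (u * p 0 + v * p 1 + w * p 2) := by
        linear_combination u * c0 + v * c1 + w * c2
      generalize hA : u * s 0 + v * s 1 + w * s 2 = A at hs fsum
      generalize hBt : u * t 0 + v * t 1 + w * t 2 = Bt at ht fsum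
      generalize hC : u * p 0 + v * p 1 + w * p 2 = C at hs ht fsum
      have hco : s 0 = t 0 ∧ s 1 = t 1 ∧ s 2 = t 2 := by omega
      exact hst (funext fun i => by fin_cases i <;>
        first | exact hco.1 | exact hco.2.1 | exact hco.2.2)
    · exact hΔ
  intro q hq
  have h := lex4_le (hmax' q hq)
  have hpB := hB p hpΔ
  rcases h with h | h
  · exact le_trans h.le hpB
  · exact le_trans (le_of_eq h.1) hpB

lemma eq_vec {p : Fin 3 → ℤ} {a b c : ℤ} (h0 : p 0 = a) (h1 : p 1 = b) (h2 : p 2 = c) :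
    p = ![a, b, c] := by
  funext i; fin_cases i <;> simpa

/-- Enumeration of the lattice points of the tetrahedron. -/
lemma enum11 {p : Fin 3 → ℤ} (h1 : p 0 + p 1 + p 2 ≤ 4) (h2 : -p 0 - p 1 + p 2 ≤ 0)
    (h3 : -p 0 + p 1 - p 2 ≤ 0) (h4 : p 0 - p 1 - p 2 ≤ 0) :
    p = ![0,0,0] ∨ p = ![0,2,2] ∨ p = ![2,0,2] ∨ p = ![2,2,0] ∨
    p = ![0,1,1] ∨ p = ![1,0,1] ∨ p = ![1,1,0] ∨ p = ![1,1,2] ∨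
    p = ![1,2,1] ∨ p = ![2,1,1] ∨ p = ![1,1,1] := by
  have h0 : p 0 = 0 ∨ p 0 = 1 ∨ p 0 = 2 := by omega
  rcases h0 with h0 | h0 | h0
  · have h : (p 1 = 0 ∧ p 2 = 0) ∨ (p 1 = 1 ∧ p 2 = 1) ∨ (p 1 = 2 ∧ p 2 = 2) := by omega
    rcases h with ⟨a, b⟩ | ⟨a, b⟩ | ⟨a, b⟩ <;> rw [eq_vec h0 a b] <;> simp
  · have h : (p 1 = 0 ∧ p 2 = 1) ∨ (p 1 = 1 ∧ p 2 = 0) ∨ (p 1 = 1 ∧ p 2 = 2) ∨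
        (p 1 = 2 ∧ p 2 = 1) ∨ (p 1 = 1 ∧ p 2 = 1) := by omega
    rcases h with ⟨a, b⟩ | ⟨a, b⟩ | ⟨a, b⟩ | ⟨a, b⟩ | ⟨a, b⟩ <;> rw [eq_vec h0 a b] <;> simp
  · have h : (p 1 = 0 ∧ p 2 = 2) ∨ (p 1 = 2 ∧ p 2 = 0) ∨ (p 1 = 1 ∧ p 2 = 1) := by omega
    rcases h with ⟨a, b⟩ | ⟨a, b⟩ | ⟨a, b⟩ <;> rw [eq_vec h0 a b] <;> simp

/-- No two even points of the tetrahedron average to `(1,1,1)`. -/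
lemma not111 {s t : Fin 3 → ℤ} (hse : Even2 s) (hte : Even2 t)
    (hs1 : s 0 + s 1 + s 2 ≤ 4) (hs2 : -s 0 - s 1 + s 2 ≤ 0) (hs3 : -s 0 + s 1 - s 2 ≤ 0)
    (hs4 : s 0 - s 1 - s 2 ≤ 0)
    (ht1 : t 0 + t 1 + t 2 ≤ 4) (ht2 : -t 0 - t 1 + t 2 ≤ 0) (ht3 : -t 0 + t 1 - t 2 ≤ 0)
    (ht4 : t 0 - t 1 - t 2 ≤ 0)
    (g0 : s 0 + t 0 = 2) (g1 : s 1 + t 1 = 2) (g2 : s 2 + t 2 = 2) : False := by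
  have e0 := hse 0; have e1 := hse 1; have e2 := hse 2
  have f0 := hte 0; have f1 := hte 1; have f2 := hte 2
  omega

lemma delta_ineqs {d : Fin 3 → ℤ} (hd : d ∈ D3) :
    d 0 + d 1 + d 2 ≤ 4 ∧ -d 0 - d 1 + d 2 ≤ 0 ∧ -d 0 + d 1 - d 2 ≤ 0 ∧ d 0 - d 1 - d 2 ≤ 0 := by
  simp only [D3, mem_insert_iff, mem_singleton_iff] at hd
  rcases hd with rfl | rfl | rfl | rfl <;> refine ⟨?_, ?_, ?_, ?_⟩ <;> decide

/-- Every element of a `Δ`-mediated set satisfies the four facet inequalities. -/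
lemma mediated_ineqs {L : Set (Fin 3 → ℤ)} (h : IsMediated D3 L) :
    ∀ q ∈ L, q 0 + q 1 + q 2 ≤ 4 ∧ -q 0 - q 1 + q 2 ≤ 0 ∧ -q 0 + q 1 - q 2 ≤ 0 ∧
      q 0 - q 1 - q 2 ≤ 0 := by
  intro q hq
  have b1 := bound_of_mediated h 1 1 1 4
    (fun d hd => by linarith [(delta_ineqs hd).1]) q hq
  have b2 := bound_of_mediated h (-1) (-1) 1 0
    (fun d hd => by linarith [(delta_ineqs hd).2.1]) q hq
  have b3 := bound_of_mediated h (-1) 1 (-1) 0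
    (fun d hd => by linarith [(delta_ineqs hd).2.2.1]) q hq
  have b4 := bound_of_mediated h 1 (-1) (-1) 0
    (fun d hd => by linarith [(delta_ineqs hd).2.2.2]) q hq
  refine ⟨by linarith, by linarith, by linarith, by linarith⟩

/-- `E10` is `Δ`-mediated. -/
lemma medE10 : IsMediated D3 E10 := by
  refine ⟨?_, ?_, ?_⟩
  · unfold E10
    repeat apply Set.Finite.insert
    exact Set.finite_singleton _
  · intro x hx
    simp only [D3, mem_insert_iff, mem_singleton_iff] at hx
    rcases hx with rfl | rfl | rfl | rfl <;> simp [E10]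
  · intro x hx
    simp only [E10, mem_insert_iff, mem_singleton_iff] at hx
    rcases hx with rfl | rfl | rfl | rfl | rfl | rfl | rfl | rfl | rfl | rfl
    · exact Or.inr (by simp [D3])
    · exact Or.inr (by simp [D3])
    · exact Or.inr (by simp [D3])
    · exact Or.inr (by simp [D3])
    · exact Or.inl ⟨![0,0,0], by simp [E10], ![0,2,2], by simp [E10], by unfold Even2; decide, by unfold Even2; decide,
        by decide, by funext i; fin_cases i <;> simp⟩
    · exact Or.inl ⟨![0,0,0], by simp [E10], ![2,0,2], by simp [E10], by unfold Even2; decide, by unfold Even2; decide,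
        by decide, by funext i; fin_cases i <;> simp⟩
    · exact Or.inl ⟨![0,0,0], by simp [E10], ![2,2,0], by simp [E10], by unfold Even2; decide, by unfold Even2; decide,
        by decide, by funext i; fin_cases i <;> simp⟩
    · exact Or.inl ⟨![0,2,2], by simp [E10], ![2,0,2], by simp [E10], by unfold Even2; decide, by unfold Even2; decide,
        by decide, by funext i; fin_cases i <;> simp⟩
    · exact Or.inl ⟨![0,2,2], by simp [E10], ![2,2,0], by simp [E10], by unfold Even2; decide, by unfold Even2; decide,
        by decide, by funext i; fin_cases i <;> simp⟩
    · exact Or.inl ⟨![2,0,2], by simp [E10], ![2,2,0], by simp [E10], by unfold Even2; decide, by unfold Even2; decide,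
        by decide, by funext i; fin_cases i <;> simp⟩

/-- `E10 = Δ ∪ Mid(Δ)`. -/
lemma E10_eq : E10 = D3 ∪ Mid2 D3 := by
  apply Set.Subset.antisymm
  · intro x hx
    simp only [E10, mem_insert_iff, mem_singleton_iff] at hx
    rcases hx with rfl | rfl | rfl | rfl | rfl | rfl | rfl | rfl | rfl | rfl
    · exact Or.inl (by simp [D3])
    · exact Or.inl (by simp [D3])
    · exact Or.inl (by simp [D3])
    · exact Or.inl (by simp [D3])
    · exact Or.inr ⟨![0,0,0], by simp [D3], ![0,2,2], by simp [D3], by unfold Even2; decide, by unfold Even2; decide,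
        by decide, by funext i; fin_cases i <;> simp⟩
    · exact Or.inr ⟨![0,0,0], by simp [D3], ![2,0,2], by simp [D3], by unfold Even2; decide, by unfold Even2; decide,
        by decide, by funext i; fin_cases i <;> simp⟩
    · exact Or.inr ⟨![0,0,0], by simp [D3], ![2,2,0], by simp [D3], by unfold Even2; decide, by unfold Even2; decide,
        by decide, by funext i; fin_cases i <;> simp⟩
    · exact Or.inr ⟨![0,2,2], by simp [D3], ![2,0,2], by simp [D3], by unfold Even2; decide, by unfold Even2; decide,
        by decide, by funext i; fin_cases i <;> simp⟩
    · exact Or.inr ⟨![0,2,2], by simp [D3], ![2,2,0], by simp [D3], by unfold Even2; decide, by unfold Even2; decide,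
        by decide, by funext i; fin_cases i <;> simp⟩
    · exact Or.inr ⟨![2,0,2], by simp [D3], ![2,2,0], by simp [D3], by unfold Even2; decide, by unfold Even2; decide,
        by decide, by funext i; fin_cases i <;> simp⟩
  · rintro m (hm | ⟨s, hsD, t, htD, hse, hte, hst, hsum⟩)
    · simp only [D3, mem_insert_iff, mem_singleton_iff] at hm
      rcases hm with rfl | rfl | rfl | rfl <;> simp [E10]
    · have hs := delta_ineqs hsD
      have ht := delta_ineqs htD
      have c0 := coord_sum hsum 0
      have c1 := coord_sum hsum 1
      have c2 := coord_sum hsum 2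
      have m1 : m 0 + m 1 + m 2 ≤ 4 := by omega
      have m2 : -m 0 - m 1 + m 2 ≤ 0 := by omega
      have m3 : -m 0 + m 1 - m 2 ≤ 0 := by omega
      have m4 : m 0 - m 1 - m 2 ≤ 0 := by omega
      rcases enum11 m1 m2 m3 m4 with rfl | rfl | rfl | rfl | rfl | rfl | rfl | rfl | rfl |
        rfl | rfl
      · simp [E10]
      · simp [E10]
      · simp [E10]
      · simp [E10]
      · simp [E10]
      · simp [E10]
      · simp [E10]
      · simp [E10]
      · simp [E10]
      · simp [E10]
      · exact (not111 hse hte hs.1 hs.2.1 hs.2.2.1 hs.2.2.2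
          ht.1 ht.2.1 ht.2.2.1 ht.2.2.2
          (by simpa using c0) (by simpa using c1) (by simpa using c2)).elim

lemma hull_halfspace (u v w B : ℝ)
    (hB : ∀ d ∈ D3, u * (d 0 : ℝ) + v * (d 1 : ℝ) + w * (d 2 : ℝ) ≤ B) :
    ∀ x ∈ convexHull ℝ (toR '' D3), u * x 0 + v * x 1 + w * x 2 ≤ B := by
  have hsub : convexHull ℝ (toR '' D3) ⊆ {x : Fin 3 → ℝ | u * x 0 + v * x 1 + w * x 2 ≤ B} := by
    apply convexHull_min
    · rintro x ⟨d, hd, rfl⟩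
      simpa [toR] using hB d hd
    · exact convex_halfSpace_le
        ⟨fun x y => by simp [Pi.add_apply]; ring,
         fun c x => by simp [Pi.smul_apply, smul_eq_mul]; ring⟩ B
  exact fun x hx => hsub hx

/-- Every lattice point of the hull satisfies the four facet inequalities. -/
lemma convZ_ineqs {p : Fin 3 → ℤ} (hp : p ∈ convZ D3) :
    p 0 + p 1 + p 2 ≤ 4 ∧ -p 0 - p 1 + p 2 ≤ 0 ∧ -p 0 + p 1 - p 2 ≤ 0 ∧
      p 0 - p 1 - p 2 ≤ 0 := by
  have hp' : toR p ∈ convexHull ℝ (toR '' D3) := hp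
  have b1 := hull_halfspace 1 1 1 4 (by
    intro d hd
    simp only [D3, mem_insert_iff, mem_singleton_iff] at hd
    rcases hd with rfl | rfl | rfl | rfl <;> norm_num [Matrix.cons_val_two, Matrix.vecHead, Matrix.vecTail]) _ hp'
  have b2 := hull_halfspace (-1) (-1) 1 0 (by
    intro d hd
    simp only [D3, mem_insert_iff, mem_singleton_iff] at hd
    rcases hd with rfl | rfl | rfl | rfl <;> norm_num [Matrix.cons_val_two, Matrix.vecHead, Matrix.vecTail]) _ hp'
  have b3 := hull_halfspace (-1) 1 (-1) 0 (by
    intro d hd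
    simp only [D3, mem_insert_iff, mem_singleton_iff] at hd
    rcases hd with rfl | rfl | rfl | rfl <;> norm_num [Matrix.cons_val_two, Matrix.vecHead, Matrix.vecTail]) _ hp'
  have b4 := hull_halfspace 1 (-1) (-1) 0 (by
    intro d hd
    simp only [D3, mem_insert_iff, mem_singleton_iff] at hd
    rcases hd with rfl | rfl | rfl | rfl <;> norm_num [Matrix.cons_val_two, Matrix.vecHead, Matrix.vecTail]) _ hp'
  simp only [toR] at b1 b2 b3 b4
  refine ⟨?_, ?_, ?_, ?_⟩ <;> [exact_mod_cast (by push_cast; linarith : ((p 0 + p 1 + p 2 : ℤ) : ℝ) ≤ 4);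
    exact_mod_cast (by push_cast; linarith : ((-p 0 - p 1 + p 2 : ℤ) : ℝ) ≤ 0);
    exact_mod_cast (by push_cast; linarith : ((-p 0 + p 1 - p 2 : ℤ) : ℝ) ≤ 0);
    exact_mod_cast (by push_cast; linarith : ((p 0 - p 1 - p 2 : ℤ) : ℝ) ≤ 0)]

lemma mid_mem_hull {C : Set (Fin 3 → ℝ)} (hC : Convex ℝ C) {s t m : Fin 3 → ℤ}
    (hs : toR s ∈ C) (ht : toR t ∈ C) (hm : ∀ i, s i + t i = m i + m i) : toR m ∈ C := by
  have h := hC hs ht (by norm_num : (0:ℝ) ≤ 1/2) (by norm_num : (0:ℝ) ≤ 1/2) (by norm_num)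
  have he : toR m = (1/2 : ℝ) • toR s + (1/2 : ℝ) • toR t := by
    funext i
    have h2 : (s i : ℝ) + t i = m i + m i := by exact_mod_cast hm i
    simp [toR, Pi.add_apply, Pi.smul_apply, smul_eq_mul]
    linarith
  rw [he]; exact h

/-- All eleven lattice points lie in the hull. -/
lemma eleven_in_convZ : ![0,0,0] ∈ convZ D3 ∧ ![0,2,2] ∈ convZ D3 ∧ ![2,0,2] ∈ convZ D3 ∧
    ![2,2,0] ∈ convZ D3 ∧ ![0,1,1] ∈ convZ D3 ∧ ![1,0,1] ∈ convZ D3 ∧ ![1,1,0] ∈ convZ D3 ∧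
    ![1,1,2] ∈ convZ D3 ∧ ![1,2,1] ∈ convZ D3 ∧ ![2,1,1] ∈ convZ D3 ∧ ![1,1,1] ∈ convZ D3 := by
  have hconv := convex_convexHull ℝ (toR '' D3)
  have hv0 : toR ![0,0,0] ∈ convexHull ℝ (toR '' D3) :=
    subset_convexHull ℝ _ ⟨_, by simp [D3], rfl⟩
  have hv1 : toR ![0,2,2] ∈ convexHull ℝ (toR '' D3) :=
    subset_convexHull ℝ _ ⟨_, by simp [D3], rfl⟩
  have hv2 : toR ![2,0,2] ∈ convexHull ℝ (toR '' D3) :=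
    subset_convexHull ℝ _ ⟨_, by simp [D3], rfl⟩
  have hv3 : toR ![2,2,0] ∈ convexHull ℝ (toR '' D3) :=
    subset_convexHull ℝ _ ⟨_, by simp [D3], rfl⟩
  have hm1 : toR ![0,1,1] ∈ convexHull ℝ (toR '' D3) := mid_mem_hull hconv hv0 hv1 (by decide)
  have hm2 : toR ![1,0,1] ∈ convexHull ℝ (toR '' D3) := mid_mem_hull hconv hv0 hv2 (by decide)
  have hm3 : toR ![1,1,0] ∈ convexHull ℝ (toR '' D3) := mid_mem_hull hconv hv0 hv3 (by decide)
  have hm4 : toR ![1,1,2] ∈ convexHull ℝ (toR '' D3) := mid_mem_hull hconv hv1 hv2 (by decide)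
  have hm5 : toR ![1,2,1] ∈ convexHull ℝ (toR '' D3) := mid_mem_hull hconv hv1 hv3 (by decide)
  have hm6 : toR ![2,1,1] ∈ convexHull ℝ (toR '' D3) := mid_mem_hull hconv hv2 hv3 (by decide)
  have hc : toR ![1,1,1] ∈ convexHull ℝ (toR '' D3) := mid_mem_hull hconv hm1 hm6 (by decide)
  exact ⟨hv0, hv1, hv2, hv3, hm1, hm2, hm3, hm4, hm5, hm6, hc⟩

/-- For `Δ = {(0,0,0),(0,2,2),(2,0,2),(2,2,0)}` the maximal mediated set equals
`(conv(Δ) ∩ ℤ³) \ {(1,1,1)}`, which equals `Δ ∪ Mid(Δ)`; in particular `Δ` is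
an M-simplex but not an H-simplex. -/
theorem dim3_M_simplex (M : Set (Fin 3 → ℤ))
    (hmed : IsMediated ({![0,0,0], ![0,2,2], ![2,0,2], ![2,2,0]} : Set (Fin 3 → ℤ)) M)
    (hmax : ∀ L, IsMediated ({![0,0,0], ![0,2,2], ![2,0,2], ![2,2,0]} : Set (Fin 3 → ℤ)) L
      → L ⊆ M) :
    M = convZ ({![0,0,0], ![0,2,2], ![2,0,2], ![2,2,0]} : Set (Fin 3 → ℤ)) \ {![1,1,1]} ∧
    M = ({![0,0,0], ![0,2,2], ![2,0,2], ![2,2,0]} : Set (Fin 3 → ℤ)) ∪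
          Mid2 ({![0,0,0], ![0,2,2], ![2,0,2], ![2,2,0]} : Set (Fin 3 → ℤ)) ∧
    M ≠ convZ ({![0,0,0], ![0,2,2], ![2,0,2], ![2,2,0]} : Set (Fin 3 → ℤ)) := by
  have hD : ({![0,0,0], ![0,2,2], ![2,0,2], ![2,2,0]} : Set (Fin 3 → ℤ)) = D3 := rfl
  rw [hD]
  have hmed' : IsMediated D3 M := hmed
  have hcz := eleven_in_convZ
  -- (1,1,1) is not in M
  have h111M : ![1,1,1] ∉ M := by
    intro h
    rcases hmed'.2.2 h with hmid | hΔ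
    · obtain ⟨s, hsL, t, htL, hse, hte, hst, hsum⟩ := hmid
      have hs := mediated_ineqs hmed' s hsL
      have ht := mediated_ineqs hmed' t htL
      have c0 := coord_sum hsum 0
      have c1 := coord_sum hsum 1
      have c2 := coord_sum hsum 2
      exact not111 hse hte hs.1 hs.2.1 hs.2.2.1 hs.2.2.2 ht.1 ht.2.1 ht.2.2.1 ht.2.2.2
        (by simpa using c0) (by simpa using c1) (by simpa using c2)
    · simp only [D3, mem_insert_iff, mem_singleton_iff] at hΔ
      rcases hΔ with h | h | h | h <;> exact absurd h (by decide)
  -- M = E10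
  have hME : M = E10 := by
    apply Set.Subset.antisymm
    · intro p hp
      have h := mediated_ineqs hmed' p hp
      rcases enum11 h.1 h.2.1 h.2.2.1 h.2.2.2 with rfl | rfl | rfl | rfl | rfl | rfl | rfl |
        rfl | rfl | rfl | rfl
      · simp [E10]
      · simp [E10]
      · simp [E10]
      · simp [E10]
      · simp [E10]
      · simp [E10]
      · simp [E10]
      · simp [E10]
      · simp [E10]
      · simp [E10]
      · exact absurd hp h111M
    · exact hmax E10 medE10
  refine ⟨?_, ?_, ?_⟩
  · -- M = convZ D3 \ {111}
    rw [hME]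
    apply Set.Subset.antisymm
    · intro q hq
      simp only [E10, mem_insert_iff, mem_singleton_iff] at hq
      rcases hq with rfl | rfl | rfl | rfl | rfl | rfl | rfl | rfl | rfl | rfl <;>
        refine ⟨?_, by simp only [mem_singleton_iff]; decide⟩
      · exact hcz.1
      · exact hcz.2.1
      · exact hcz.2.2.1
      · exact hcz.2.2.2.1
      · exact hcz.2.2.2.2.1
      · exact hcz.2.2.2.2.2.1
      · exact hcz.2.2.2.2.2.2.1
      · exact hcz.2.2.2.2.2.2.2.1
      · exact hcz.2.2.2.2.2.2.2.2.1
      · exact hcz.2.2.2.2.2.2.2.2.2.1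
    · rintro p ⟨hp, hp1⟩
      have h := convZ_ineqs hp
      rcases enum11 h.1 h.2.1 h.2.2.1 h.2.2.2 with rfl | rfl | rfl | rfl | rfl | rfl | rfl |
        rfl | rfl | rfl | rfl
      · simp [E10]
      · simp [E10]
      · simp [E10]
      · simp [E10]
      · simp [E10]
      · simp [E10]
      · simp [E10]
      · simp [E10]
      · simp [E10]
      · simp [E10]
      · exact (hp1 rfl).elim
  · rw [hME]; exact E10_eq
  · intro h
    have hmem : ![1,1,1] ∈ M := by rw [h]; exact hcz.2.2.2.2.2.2.2.2.2.2
    exact h111M hmem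
end

section
/- Conversely, every unimodular affine transformation T(x) = A x + b with A ∈ GL_n(ℤ) and b ∈ (2ℤ)^n is maximal mediated set preserving; in particular, for every simplicial set Δ ⊆ (2ℤ)^n one has T(Δ*) = T(Δ)*. -/
open Set

/-- The maximal `Δ`-mediated set: the union of all `Δ`-mediated sets. -/
def MMS {n : ℕ} (Δ : Set (Fin n → ℤ)) : Set (Fin n → ℤ) := ⋃₀ {L | IsMediated Δ L}

/-- A `k`-dimensional simplicial set: `k+1` affinely independent even lattice points. -/
def IsSimplicial {n : ℕ} (k : ℕ) (Δ : Set (Fin n → ℤ)) : Prop :=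
  (∀ p ∈ Δ, Even2 p) ∧ ∃ f : Fin (k + 1) → (Fin n → ℤ),
    Set.range f = Δ ∧ AffineIndependent ℝ (fun i => toR (f i))

/-- The set of integer points whose real image lies in `T(toR(Δ))`,
i.e., the integral realization of the image `T(Δ)`. -/
def ImgZ {n : ℕ} (T : (Fin n → ℝ) → (Fin n → ℝ)) (Δ : Set (Fin n → ℤ)) :
    Set (Fin n → ℤ) := toR ⁻¹' (T '' (toR '' Δ))

/-- `T : ℝ^n → ℝ^n` is maximal mediated set preserving. -/
def MMSPreserving {n : ℕ} (T : (Fin n → ℝ) → (Fin n → ℝ)) : Prop :=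
  ∀ (k : ℕ) (Δ : Set (Fin n → ℤ)), IsSimplicial k Δ →
    (T '' (toR '' Δ) ⊆ Set.range (toR (n := n)) ∧ IsSimplicial k (ImgZ T Δ)) ∧
    Set.BijOn T (toR '' MMS Δ) (toR '' MMS (ImgZ T Δ)) ∧
    Set.BijOn T (toR '' convZ Δ) (toR '' convZ (ImgZ T Δ))

-- aux
def Sfun {n : ℕ} (A : Matrix (Fin n) (Fin n) ℤ) (b : Fin n → ℤ) (p : Fin n → ℤ) : Fin n → ℤ :=
  A.mulVec p + b

noncomputable def Tmap {n : ℕ} (A : Matrix (Fin n) (Fin n) ℤ) (b : Fin n → ℤ) :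
    (Fin n → ℝ) →ᵃ[ℝ] (Fin n → ℝ) where
  toFun := fun x => (A.map (Int.cast : ℤ → ℝ)).mulVec x + toR b
  linear := Matrix.mulVecLin (A.map (Int.cast : ℤ → ℝ))
  map_vadd' := by
    intro p v
    simp [Matrix.mulVec_add, Matrix.mulVecLin]
    abel

lemma toR_Sfun {n : ℕ} (A : Matrix (Fin n) (Fin n) ℤ) (b p : Fin n → ℤ) :
    toR (Sfun A b p) = Tmap A b (toR p) := by
  funext i
  simp [toR, Sfun, Tmap, Matrix.mulVec, dotProduct, Matrix.map]

lemma even2_Sfun {n : ℕ} {A : Matrix (Fin n) (Fin n) ℤ} {b : Fin n → ℤ} (hb : Even2 b)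
    {p : Fin n → ℤ} (hp : Even2 p) : Even2 (Sfun A b p) := by
  intro i
  simp only [Sfun, Pi.add_apply, Matrix.mulVec, dotProduct]
  refine dvd_add (Finset.dvd_sum fun j _ => ?_) (hb i)
  exact (hp j).mul_left _

lemma Sfun_midsum {n : ℕ} (A : Matrix (Fin n) (Fin n) ℤ) (b : Fin n → ℤ)
    {s t m : Fin n → ℤ} (h : s + t = 2 • m) :
    Sfun A b s + Sfun A b t = 2 • Sfun A b m := by
  have : s + t = m + m := by rw [h, two_smul]
  simp only [Sfun, two_smul]
  rw [show A.mulVec s + b + (A.mulVec t + b) = A.mulVec s + A.mulVec t + (b + b) from by abel,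
    ← Matrix.mulVec_add, this, Matrix.mulVec_add]
  abel

lemma Sfun_leftinv {n : ℕ} {A B : Matrix (Fin n) (Fin n) ℤ} (hBA : B * A = 1)
    (b : Fin n → ℤ) (p : Fin n → ℤ) :
    Sfun B (-(B.mulVec b)) (Sfun A b p) = p := by
  simp only [Sfun, Matrix.mulVec_add, Matrix.mulVec_mulVec, hBA, Matrix.one_mulVec]
  abel

lemma Sfun_inj {n : ℕ} {A B : Matrix (Fin n) (Fin n) ℤ} (hBA : B * A = 1)
    (b : Fin n → ℤ) : Function.Injective (Sfun A b) :=
  Function.LeftInverse.injective (Sfun_leftinv hBA b)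

lemma even2_mulVec {n : ℕ} {M : Matrix (Fin n) (Fin n) ℤ} {p : Fin n → ℤ} (hp : Even2 p) :
    Even2 (M.mulVec p) := by
  intro i
  simp only [Matrix.mulVec, dotProduct]
  exact Finset.dvd_sum fun j _ => (hp j).mul_left _

lemma Sfun_rightinv {n : ℕ} {A B : Matrix (Fin n) (Fin n) ℤ} (hAB : A * B = 1)
    (b : Fin n → ℤ) (q : Fin n → ℤ) :
    Sfun A b (Sfun B (-(B.mulVec b)) q) = q := by
  simp only [Sfun, Matrix.mulVec_add, Matrix.mulVec_neg, Matrix.mulVec_mulVec, hAB,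
    Matrix.one_mulVec]
  abel

lemma image_Sfun_rightinv {n : ℕ} {A B : Matrix (Fin n) (Fin n) ℤ} (hAB : A * B = 1)
    (b : Fin n → ℤ) (X : Set (Fin n → ℤ)) :
    Sfun A b '' (Sfun B (-(B.mulVec b)) '' X) = X := by
  rw [Set.image_image]
  simp [Sfun_rightinv hAB]

lemma image_Sfun_leftinv {n : ℕ} {A B : Matrix (Fin n) (Fin n) ℤ} (hBA : B * A = 1)
    (b : Fin n → ℤ) (X : Set (Fin n → ℤ)) :
    Sfun B (-(B.mulVec b)) '' (Sfun A b '' X) = X := by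
  rw [Set.image_image]
  simp [Sfun_leftinv hBA]

lemma mediated_image {n : ℕ} {A B : Matrix (Fin n) (Fin n) ℤ} (hBA : B * A = 1)
    {b : Fin n → ℤ} (hb : Even2 b) {Δ L : Set (Fin n → ℤ)} (hL : IsMediated Δ L) :
    IsMediated (Sfun A b '' Δ) (Sfun A b '' L) := by
  obtain ⟨hfin, hΔL, hmid⟩ := hL
  refine ⟨hfin.image _, Set.image_mono hΔL, ?_⟩
  rintro _ ⟨x, hx, rfl⟩
  rcases hmid hx with h | h
  · left
    obtain ⟨s, hs, t, ht, hse, hte, hst, hsum⟩ := h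
    exact ⟨Sfun A b s, mem_image_of_mem _ hs, Sfun A b t, mem_image_of_mem _ ht,
      even2_Sfun hb hse, even2_Sfun hb hte, fun h => hst (Sfun_inj hBA b h),
      Sfun_midsum A b hsum⟩
  · right; exact mem_image_of_mem _ h

lemma mms_image_subset {n : ℕ} {A B : Matrix (Fin n) (Fin n) ℤ} (hBA : B * A = 1)
    {b : Fin n → ℤ} (hb : Even2 b) (Δ : Set (Fin n → ℤ)) :
    Sfun A b '' MMS Δ ⊆ MMS (Sfun A b '' Δ) := by
  rintro _ ⟨x, hx, rfl⟩
  obtain ⟨L, hL, hxL⟩ := hx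
  exact ⟨Sfun A b '' L, mediated_image hBA hb hL, mem_image_of_mem _ hxL⟩

lemma mms_image {n : ℕ} {A B : Matrix (Fin n) (Fin n) ℤ} (hBA : B * A = 1) (hAB : A * B = 1)
    {b : Fin n → ℤ} (hb : Even2 b) (Δ : Set (Fin n → ℤ)) :
    Sfun A b '' MMS Δ = MMS (Sfun A b '' Δ) := by
  refine subset_antisymm (mms_image_subset hBA hb Δ) ?_
  have hb' : Even2 (-(B.mulVec b)) := fun i => (dvd_neg).2 (even2_mulVec hb i)
  have h2 := mms_image_subset (A := B) (B := A) hAB hb' (Sfun A b '' Δ)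
  rw [image_Sfun_leftinv hBA] at h2
  calc MMS (Sfun A b '' Δ)
      = Sfun A b '' (Sfun B (-(B.mulVec b)) '' MMS (Sfun A b '' Δ)) := by
        rw [image_Sfun_rightinv hAB]
    _ ⊆ Sfun A b '' MMS Δ := Set.image_mono h2

lemma toR_image_Sfun {n : ℕ} (A : Matrix (Fin n) (Fin n) ℤ) (b : Fin n → ℤ)
    (X : Set (Fin n → ℤ)) :
    toR '' (Sfun A b '' X) = Tmap A b '' (toR '' X) := by
  rw [Set.image_image, Set.image_image]
  simp only [toR_Sfun]

lemma convZ_image_subset {n : ℕ} (A : Matrix (Fin n) (Fin n) ℤ) (b : Fin n → ℤ)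
    (Δ : Set (Fin n → ℤ)) :
    Sfun A b '' convZ Δ ⊆ convZ (Sfun A b '' Δ) := by
  rintro _ ⟨p, hp, rfl⟩
  show toR (Sfun A b p) ∈ convexHull ℝ (toR '' (Sfun A b '' Δ))
  rw [toR_image_Sfun, ← AffineMap.image_convexHull, toR_Sfun]
  exact mem_image_of_mem _ hp

lemma convZ_image {n : ℕ} {A B : Matrix (Fin n) (Fin n) ℤ} (hBA : B * A = 1) (hAB : A * B = 1)
    (b : Fin n → ℤ) (Δ : Set (Fin n → ℤ)) :
    Sfun A b '' convZ Δ = convZ (Sfun A b '' Δ) := by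
  refine subset_antisymm (convZ_image_subset A b Δ) ?_
  have h2 := convZ_image_subset B (-(B.mulVec b)) (Sfun A b '' Δ)
  rw [image_Sfun_leftinv hBA] at h2
  calc convZ (Sfun A b '' Δ)
      = Sfun A b '' (Sfun B (-(B.mulVec b)) '' convZ (Sfun A b '' Δ)) := by
        rw [image_Sfun_rightinv hAB]
    _ ⊆ Sfun A b '' convZ Δ := Set.image_mono h2

lemma map_mul_one {n : ℕ} {A B : Matrix (Fin n) (Fin n) ℤ} (hBA : B * A = 1) :
    (B.map (Int.cast : ℤ → ℝ)) * (A.map (Int.cast : ℤ → ℝ)) = 1 := by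
  have : B.map (Int.castRingHom ℝ) * A.map (Int.castRingHom ℝ) = 1 := by
    rw [← Matrix.map_mul, hBA, Matrix.map_one _ (by simp) (by simp)]
  exact this

lemma Tmap_inj {n : ℕ} {A B : Matrix (Fin n) (Fin n) ℤ} (hBA : B * A = 1)
    (b : Fin n → ℤ) : Function.Injective (Tmap A b) := by
  intro x y h
  have h1 : (A.map (Int.cast : ℤ → ℝ)).mulVec x = (A.map (Int.cast : ℤ → ℝ)).mulVec y :=
    add_right_cancel (h : _ + toR b = _ + toR b)
  have h2 := congrArg (fun z => (B.map (Int.cast : ℤ → ℝ)).mulVec z) h1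
  simpa [Matrix.mulVec_mulVec, map_mul_one hBA, Matrix.one_mulVec] using h2

lemma isSimplicial_image {n : ℕ} {A B : Matrix (Fin n) (Fin n) ℤ} (hBA : B * A = 1)
    {b : Fin n → ℤ} (hb : Even2 b) {k : ℕ} {Δ : Set (Fin n → ℤ)}
    (h : IsSimplicial k Δ) : IsSimplicial k (Sfun A b '' Δ) := by
  obtain ⟨heven, f, hf, hind⟩ := h
  refine ⟨?_, Sfun A b ∘ f, ?_, ?_⟩
  · rintro _ ⟨p, hp, rfl⟩; exact even2_Sfun hb (heven p hp)
  · rw [Set.range_comp, hf]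
  · have heq : (fun i => toR ((Sfun A b ∘ f) i)) = (Tmap A b) ∘ (fun i => toR (f i)) := by
      funext i; simp [toR_Sfun]
    rw [heq]
    exact hind.map' (Tmap A b) (Tmap_inj hBA b)

/-- Every unimodular affine transformation `T(x) = Ax + b` with `A ∈ GL_n(ℤ)` and
`b ∈ (2ℤ)^n` is MMS preserving; in particular `T(Δ*) = T(Δ)*` for every
simplicial set `Δ ⊆ (2ℤ)^n`. -/
theorem unimodular_affine_is_mmsPreserving {n : ℕ}
    (A : Matrix (Fin n) (Fin n) ℤ) (hA : A.det = 1 ∨ A.det = -1)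
    (b : Fin n → ℤ) (hb : Even2 b) :
    MMSPreserving (fun x => (A.map (Int.cast : ℤ → ℝ)).mulVec x + toR b) ∧
    ∀ (k : ℕ) (Δ : Set (Fin n → ℤ)), IsSimplicial k Δ →
      (fun x => (A.map (Int.cast : ℤ → ℝ)).mulVec x + toR b) '' (toR '' MMS Δ) =
        toR '' MMS (ImgZ (fun x => (A.map (Int.cast : ℤ → ℝ)).mulVec x + toR b) Δ) := by
  classical
  set T : (Fin n → ℝ) → (Fin n → ℝ) :=
    fun x => (A.map (Int.cast : ℤ → ℝ)).mulVec x + toR b with hT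
  -- inverse matrix over ℤ
  have hu : IsUnit A.det := by
    rcases hA with h | h <;> simp [h]
  set B : Matrix (Fin n) (Fin n) ℤ := A⁻¹ with hBdef
  have hBA : B * A = 1 := Matrix.nonsing_inv_mul A hu
  have hAB : A * B = 1 := Matrix.mul_nonsing_inv A hu
  have hTco : T = fun x => Tmap A b x := rfl
  -- ImgZ T Δ = Sfun A b '' Δ
  have hImg : ∀ Δ : Set (Fin n → ℤ), ImgZ T Δ = Sfun A b '' Δ := by
    intro Δ
    have himg : T '' (toR '' Δ) = toR '' (Sfun A b '' Δ) := by
      rw [toR_image_Sfun, Set.image_image, Set.image_image]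
      rfl
    rw [ImgZ, himg, Set.preimage_image_eq _ toR_injective]
  have key : ∀ (k : ℕ) (Δ : Set (Fin n → ℤ)), IsSimplicial k Δ →
      (T '' (toR '' Δ) ⊆ Set.range (toR (n := n)) ∧ IsSimplicial k (ImgZ T Δ)) ∧
      Set.BijOn T (toR '' MMS Δ) (toR '' MMS (ImgZ T Δ)) ∧
      Set.BijOn T (toR '' convZ Δ) (toR '' convZ (ImgZ T Δ)) ∧
      T '' (toR '' MMS Δ) = toR '' MMS (ImgZ T Δ) := by
    intro k Δ hΔ
    have himg : ∀ X : Set (Fin n → ℤ), T '' (toR '' X) = toR '' (Sfun A b '' X) := by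
      intro X
      rw [toR_image_Sfun, Set.image_image, Set.image_image]
      rfl
    have hMMSeq : T '' (toR '' MMS Δ) = toR '' MMS (ImgZ T Δ) := by
      rw [hImg, ← mms_image hBA hAB hb, himg]
    have hconveq : T '' (toR '' convZ Δ) = toR '' convZ (ImgZ T Δ) := by
      rw [hImg, ← convZ_image hBA hAB b, himg]
    have hTinj : Function.Injective T := Tmap_inj hBA b
    refine ⟨⟨?_, ?_⟩, ?_, ?_, hMMSeq⟩
    · rw [himg]
      exact Set.image_subset_range _ _
    · rw [hImg]
      exact isSimplicial_image hBA hb hΔ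
    · rw [← hMMSeq]
      exact (hTinj.injOn).bijOn_image
    · rw [← hconveq]
      exact (hTinj.injOn).bijOn_image
  constructor
  · intro k Δ hΔ
    obtain ⟨h1, h2, h3, _⟩ := key k Δ hΔ
    exact ⟨h1, h2, h3⟩
  · intro k Δ hΔ
    exact (key k Δ hΔ).2.2.2
end
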